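/- Let h : ℝ → ℝ be continuous with h(0) = 0, let D ⊆ ℝ be an open set containing 0, and suppose there exist k > 0 and α ∈ (0,1) such that sign(x)·h(x) ≤ -k·|x|^α for all x ∈ D. Let x : [0,∞) → ℝ be differentiable with x'(t) = h(x(t)) and x(t) ∈ D for all t ≥ 0. Then x(t) = 0 for all t ≥ |x(0)|^(1-α)/(k·(1-α)). -/

import Mathlib

open Set Filter Topology

/-- While a function stays positive and satisfies `u' ≤ -k u^α`, the quantity
`u^(1-α)` decreases at rate at least `k(1-α)`. -/
lemma decay_aux (k α : ℝ) (hk : 0 < k) (hα0 : 0 < α) (hα1 : α < 1)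
    (u : ℝ → ℝ) (a b : ℝ) (hab : a ≤ b)
    (hpos : ∀ s ∈ Icc a b, 0 < u s)
    (hder : ∀ s ∈ Icc a b, ∃ d, HasDerivAt u d s ∧ d ≤ -k * u s ^ α) :
    u b ^ (1 - α) ≤ u a ^ (1 - α) - k * (1 - α) * (b - a) := by
  have h1α : 0 < 1 - α := by linarith
  set g : ℝ → ℝ := fun s => u s ^ (1 - α) + k * (1 - α) * s with hgdef
  have key : ∀ s ∈ Icc a b, ∃ d, HasDerivAt g d s ∧ d ≤ 0 := by
    intro s hs
    obtain ⟨d, hd, hdle⟩ := hder s hs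
    have hus := hpos s hs
    have h1 : HasDerivAt (fun s => u s ^ (1 - α)) (d * (1 - α) * u s ^ (1 - α - 1)) s :=
      hd.rpow_const (Or.inl hus.ne')
    have h2 : HasDerivAt (fun s => k * (1 - α) * s) (k * (1 - α)) s := by
      simpa using (hasDerivAt_id s).const_mul (k * (1 - α))
    refine ⟨_, h1.add h2, ?_⟩
    have hexp : (1 : ℝ) - α - 1 = -α := by ring
    have hone : u s ^ α * u s ^ (-α) = 1 := by
      rw [← Real.rpow_add hus]; simp
    have hnn : 0 ≤ u s ^ (-α) := (Real.rpow_pos_of_pos hus _).le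
    have h3 : d * u s ^ (-α) ≤ -k := by
      have := mul_le_mul_of_nonneg_right hdle hnn
      have he : -k * u s ^ α * u s ^ (-α) = -k := by
        rw [mul_assoc, hone, mul_one]
      linarith [he ▸ this]
    rw [hexp]
    nlinarith [mul_le_mul_of_nonneg_right h3 h1α.le]
  have hcont : ContinuousOn g (Icc a b) := fun s hs =>
    ((key s hs).choose_spec.1).continuousAt.continuousWithinAt
  have hdiff : DifferentiableOn ℝ g (interior (Icc a b)) := by
    intro s hs
    rw [interior_Icc] at hs
    exact ((key s (Ioo_subset_Icc_self hs)).choose_spec.1).differentiableAt.differentiableWithinAt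
  have hder0 : ∀ s ∈ interior (Icc a b), deriv g s ≤ 0 := by
    intro s hs
    rw [interior_Icc] at hs
    obtain ⟨d, hd, hd0⟩ := key s (Ioo_subset_Icc_self hs)
    rw [hd.deriv]; exact hd0
  have hanti := antitoneOn_of_deriv_nonpos (convex_Icc a b) hcont hdiff hder0
  have := hanti (left_mem_Icc.2 hab) (right_mem_Icc.2 hab) hab
  simp only [hgdef] at this
  linarith

/-- Once a solution hits zero, it cannot become positive later. -/
lemma no_escape_aux (k α : ℝ) (hk : 0 < k) (hα0 : 0 < α) (hα1 : α < 1)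
    (x : ℝ → ℝ) (s t' : ℝ) (hs : 0 ≤ s) (hst : s ≤ t')
    (hder : ∀ u, 0 ≤ u → ∃ d, HasDerivAt x d u ∧ (0 < x u → d ≤ -k * x u ^ α))
    (hxs : x s = 0) : ¬ 0 < x t' := by
  intro hpos
  have h1α : 0 < 1 - α := by linarith
  have hcx : ∀ u, 0 ≤ u → ContinuousAt x u := fun u hu =>
    ((hder u hu).choose_spec.1).continuousAt
  have hcOn : ∀ a b, 0 ≤ a → ContinuousOn x (Icc a b) := fun a b ha v hv =>
    (hcx v (ha.trans hv.1)).continuousWithinAt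
  set Z : Set ℝ := Icc s t' ∩ x ⁻¹' {0} with hZdef
  have hZne : Z.Nonempty := ⟨s, ⟨le_refl s, hst⟩, hxs⟩
  have hZbdd : BddAbove Z := ⟨t', fun v hv => hv.1.2⟩
  have hZclosed : IsClosed Z :=
    (hcOn s t' hs).preimage_isClosed_of_isClosed isClosed_Icc isClosed_singleton
  obtain ⟨⟨hm1, hm2⟩, hm0⟩ := hZclosed.csSup_mem hZne hZbdd
  set m := sSup Z with hmdef
  have hm0' : x m = 0 := hm0
  have hmt : m < t' := lt_of_le_of_ne hm2 (fun he => by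
    rw [he] at hm0'; exact hpos.ne' hm0')
  have hm0le : 0 ≤ m := hs.trans hm1
  have hposOn : ∀ v ∈ Ioc m t', 0 < x v := by
    intro v hv
    rcases lt_trichotomy (x v) 0 with hlt | heq | hgt
    · obtain ⟨c, hc, hc0⟩ := intermediate_value_Icc hv.2 (hcOn v t' (hm0le.trans hv.1.le))
        (⟨hlt.le, hpos.le⟩ : (0:ℝ) ∈ Icc (x v) (x t'))
      have hcZ : c ∈ Z := ⟨⟨hm1.trans (hv.1.le.trans hc.1), hc.2⟩, hc0⟩
      linarith [hv.1, hc.1, le_csSup hZbdd hcZ]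
    · have hvZ : v ∈ Z := ⟨⟨hm1.trans hv.1.le, hv.2⟩, heq⟩
      linarith [hv.1, le_csSup hZbdd hvZ]
    · exact hgt
  have hev1 : ∀ᶠ v in 𝓝[>] m, x v < x t' := by
    have h0 : Tendsto x (𝓝 m) (𝓝 0) := by
      have := hcx m hm0le; rwa [ContinuousAt, hm0'] at this
    exact (h0.eventually_lt_const hpos).filter_mono nhdsWithin_le_nhds
  have hev2' : ∀ᶠ v in 𝓝 m, v < t' := Iio_mem_nhds hmt
  have hev2 : ∀ᶠ v in 𝓝[>] m, v < t' := hev2'.filter_mono nhdsWithin_le_nhds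
  have hev3 : ∀ᶠ v in 𝓝[>] m, m < v := self_mem_nhdsWithin
  obtain ⟨a, ha1, ha2, ha3⟩ := (hev1.and (hev2.and hev3)).exists
  have hat : a ≤ t' := ha2.le
  have hma : m < a := ha3
  have hapos : 0 < x a := hposOn a ⟨hma, hat⟩
  have hdec := decay_aux k α hk hα0 hα1 x a t' hat
    (fun v hv => hposOn v ⟨hma.trans_le hv.1, hv.2⟩)
    (fun v hv => by
      obtain ⟨d, hd1, hd2⟩ := hder v (hm0le.trans (hma.le.trans hv.1))
      exact ⟨d, hd1, hd2 (hposOn v ⟨hma.trans_le hv.1, hv.2⟩)⟩)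
  have hcmp : x a ^ (1 - α) ≤ x t' ^ (1 - α) :=
    Real.rpow_le_rpow hapos.le ha1.le h1α.le
  have hposint : 0 < k * (1 - α) * (t' - a) :=
    mul_pos (mul_pos hk h1α) (by linarith [ha2])
  linarith

/-- Sufficient geometric condition for finite-time stability of a scalar system:
if `sign(x)·h(x) ≤ -k·|x|^α` on an open neighborhood `D` of the origin, then any
solution of `ẋ = h(x)` remaining in `D` reaches the origin by time
`|x(0)|^(1-α)/(k(1-α))`. -/
theorem stmt_2 (h : ℝ → ℝ) (hcont : Continuous h) (h0 : h 0 = 0)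
    (D : Set ℝ) (hDopen : IsOpen D) (h0D : (0 : ℝ) ∈ D)
    (k α : ℝ) (hk : 0 < k) (hα0 : 0 < α) (hα1 : α < 1)
    (hcond : ∀ y ∈ D, Real.sign y * h y ≤ -k * |y| ^ α)
    (x : ℝ → ℝ) (hx : ∀ t, 0 ≤ t → HasDerivAt x (h (x t)) t)
    (hxD : ∀ t, 0 ≤ t → x t ∈ D) :
    ∀ t, |x 0| ^ (1 - α) / (k * (1 - α)) ≤ t → x t = 0 := by
  intro t ht
  have h1α : 0 < 1 - α := by linarith
  have hkα : 0 < k * (1 - α) := mul_pos hk h1α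
  have hT0 : 0 ≤ |x 0| ^ (1 - α) / (k * (1 - α)) := by positivity
  have ht0 : 0 ≤ t := hT0.trans ht
  have hcx : ∀ u, 0 ≤ u → ContinuousAt x u := fun u hu => (hx u hu).continuousAt
  have hcOn : ∀ a b, 0 ≤ a → ContinuousOn x (Icc a b) := fun a b ha v hv =>
    (hcx v (ha.trans hv.1)).continuousWithinAt
  have hderP : ∀ u, 0 ≤ u → ∃ d, HasDerivAt x d u ∧ (0 < x u → d ≤ -k * x u ^ α) := by
    intro u hu
    refine ⟨h (x u), hx u hu, fun hp => ?_⟩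
    have := hcond (x u) (hxD u hu)
    rwa [Real.sign_of_pos hp, one_mul, abs_of_pos hp] at this
  have hderN : ∀ u, 0 ≤ u → ∃ d, HasDerivAt (fun v => -x v) d u ∧
      (0 < -x u → d ≤ -k * (-x u) ^ α) := by
    intro u hu
    refine ⟨-(h (x u)), (hx u hu).neg, fun hp => ?_⟩
    have hn : x u < 0 := by linarith
    have := hcond (x u) (hxD u hu)
    rwa [Real.sign_of_neg hn, neg_one_mul, abs_of_neg hn] at this
  have hge : |x 0| ^ (1 - α) ≤ k * (1 - α) * t := by
    rw [div_le_iff₀ hkα] at ht; linarith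
  by_cases hex : ∃ s ∈ Icc 0 t, x s = 0
  · obtain ⟨s, hsI, hs0⟩ := hex
    by_contra hne
    rcases lt_trichotomy (x t) 0 with hlt | heq | hgt
    · exact no_escape_aux k α hk hα0 hα1 (fun v => -x v) s t hsI.1 hsI.2 hderN
        (by simp [hs0]) (by simpa using hlt)
    · exact hne heq
    · exact no_escape_aux k α hk hα0 hα1 x s t hsI.1 hsI.2 hderP hs0 hgt
  · push_neg at hex
    exfalso
    have hx0 : x 0 ≠ 0 := hex 0 ⟨le_refl 0, ht0⟩
    rcases hx0.lt_or_gt with hneg | hpos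
    · have hposAll : ∀ v ∈ Icc 0 t, 0 < -x v := by
        intro v hv
        rcases lt_trichotomy (x v) 0 with h1 | h2 | h3
        · linarith
        · exact absurd h2 (hex v hv)
        · obtain ⟨c, hc, hc0⟩ := intermediate_value_Icc hv.1 (hcOn 0 v le_rfl)
            (⟨hneg.le, h3.le⟩ : (0:ℝ) ∈ Icc (x 0) (x v))
          exact absurd hc0 (hex c ⟨hc.1, hc.2.trans hv.2⟩)
      have hdercond : ∀ v ∈ Icc 0 t, ∃ d, HasDerivAt (fun w => -x w) d v ∧
          d ≤ -k * (-x v) ^ α := by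
        intro v hv
        obtain ⟨d, hd1, hd2⟩ := hderN v hv.1
        exact ⟨d, hd1, hd2 (hposAll v hv)⟩
      have hd := decay_aux k α hk hα0 hα1 (fun v => -x v) 0 t ht0 hposAll hdercond
      have habs : |x 0| = -x 0 := abs_of_neg hneg
      rw [habs] at hge
      have hposT : 0 < (-x t) ^ (1 - α) :=
        Real.rpow_pos_of_pos (hposAll t ⟨ht0, le_rfl⟩) _
      linarith
    · have hposAll : ∀ v ∈ Icc 0 t, 0 < x v := by
        intro v hv
        rcases lt_trichotomy (x v) 0 with h1 | h2 | h3
        · obtain ⟨c, hc, hc0⟩ := intermediate_value_Icc' hv.1 (hcOn 0 v le_rfl)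
            (⟨h1.le, hpos.le⟩ : (0:ℝ) ∈ Icc (x v) (x 0))
          exact absurd hc0 (hex c ⟨hc.1, hc.2.trans hv.2⟩)
        · exact absurd h2 (hex v hv)
        · exact h3
      have hdercond : ∀ v ∈ Icc 0 t, ∃ d, HasDerivAt x d v ∧ d ≤ -k * x v ^ α := by
        intro v hv
        obtain ⟨d, hd1, hd2⟩ := hderP v hv.1
        exact ⟨d, hd1, hd2 (hposAll v hv)⟩
      have hd := decay_aux k α hk hα0 hα1 x 0 t ht0 hposAll hdercond
      have habs : |x 0| = x 0 := abs_of_pos hpos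
      rw [habs] at hge
      have hposT : 0 < (x t) ^ (1 - α) :=
        Real.rpow_pos_of_pos (hposAll t ⟨ht0, le_rfl⟩) _
      linarith
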